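/- arXiv:1110.4620 — 2 statements merged into one kernel-verified Lean document; each statement's English description precedes it below -/
import Mathlib

section
/- Let μ and ν be Borel probability measures on a Polish space Σ with ν ≪ μ, let ξ be a Borel probability measure on [0,∞) with mean 1 and finite exponential moments, and let Λ_ξ*(x) = sup_{α∈ℝ} {αx − log ∫ e^{αw} ξ(dw)}. Then for any Borel probability measure ρ on [0,∞)×Σ whose second marginal is μ and whose disintegration kernels ρ_x satisfy ∫ w ρ_x(dw) = dν/dμ(x) for μ-a.e. x, one has ∫_Σ H(ρ_x | ξ) μ(dx) ≥ ∫_Σ Λ_ξ*(dν/dμ(x)) μ(dx), where H denotes relative entropy. -/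
open MeasureTheory ENNReal NNReal Filter

/-- Nonnegativity of relative entropy. -/
lemma kl_nonneg' {Ω : Type*} [MeasurableSpace Ω] (μ ν : Measure Ω)
    [IsProbabilityMeasure μ] [IsProbabilityMeasure ν] (hμν : μ ≪ ν)
    (hint : Integrable (llr μ ν) μ) : 0 ≤ ∫ x, llr μ ν x ∂μ := by
  have hexp : Integrable (fun x => Real.exp (-(llr μ ν x))) μ :=
    (Measure.integrable_toReal_rnDeriv).congr (exp_neg_llr hμν).symm
  have hjensen : Real.exp (∫ x, -(llr μ ν x) ∂μ) ≤ ∫ x, Real.exp (-(llr μ ν x)) ∂μ := by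
    refine convexOn_exp.map_integral_le Real.continuous_exp.continuousOn isClosed_univ
      (Filter.Eventually.of_forall fun _ => Set.mem_univ _) hint.neg ?_
    exact hexp
  have h1 : ∫ x, Real.exp (-(llr μ ν x)) ∂μ ≤ 1 := by
    calc ∫ x, Real.exp (-(llr μ ν x)) ∂μ = ∫ x, (ν.rnDeriv μ x).toReal ∂μ :=
          integral_congr_ae (exp_neg_llr hμν)
      _ = ∫ x in Set.univ, (ν.rnDeriv μ x).toReal ∂μ := by rw [setIntegral_univ]
      _ ≤ (ν Set.univ).toReal := Measure.setIntegral_toReal_rnDeriv_le (measure_ne_top ν _)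
      _ = 1 := by simp
  have := hjensen.trans h1
  rw [Real.exp_le_one_iff, integral_neg, neg_nonpos] at this
  exact this

/-- Gibbs / Donsker-Varadhan inequality. -/
lemma gibbs' {Ω : Type*} [MeasurableSpace Ω] (μ ξ : Measure Ω)
    [IsProbabilityMeasure μ] [IsProbabilityMeasure ξ] (hμξ : μ ≪ ξ)
    (hint : Integrable (llr μ ξ) μ) (f : Ω → ℝ) (hfμ : Integrable f μ)
    (hfξ : Integrable (fun x => Real.exp (f x)) ξ) :
    ∫ x, f x ∂μ - Real.log (∫ x, Real.exp (f x) ∂ξ) ≤ ∫ x, llr μ ξ x ∂μ := by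
  haveI hη : IsProbabilityMeasure (ξ.tilted f) := isProbabilityMeasure_tilted hfξ
  have hμη : μ ≪ ξ.tilted f := hμξ.trans (absolutelyContinuous_tilted hfξ)
  have h_eq := integral_llr_tilted_right hμξ hfμ hfξ hint
  have h_int' : Integrable (llr μ (ξ.tilted f)) μ :=
    integrable_llr_tilted_right hμξ hfμ hint hfξ
  have h0 := kl_nonneg' μ (ξ.tilted f) hμη h_int'
  rw [h_eq] at h0
  linarith

/-- Finite entropy w.r.t. a measure with exponential moments gives an integrable mean. -/
lemma integrable_id_of_llr (μ ξ : Measure ℝ)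
    [IsProbabilityMeasure μ] [IsProbabilityMeasure ξ] (hμξ : μ ≪ ξ)
    (hint : Integrable (llr μ ξ) μ) (h0 : ∀ᵐ w ∂μ, 0 ≤ w)
    (hξexp : Integrable (fun x => Real.exp x) ξ) :
    Integrable (fun w => w) μ := by
  set g : ℕ → ℝ → ℝ := fun n w => min (max w 0) n with hg
  have hgmeas : ∀ n, Measurable (g n) := fun n =>
    (measurable_id.max measurable_const).min measurable_const
  have hg_nonneg : ∀ n w, 0 ≤ g n w := fun n w => le_min (le_max_right _ _) (Nat.cast_nonneg n)
  have hgint : ∀ n, Integrable (g n) μ := by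
    intro n
    refine (integrable_const (n : ℝ)).mono' (hgmeas n).aestronglyMeasurable ?_
    refine Filter.Eventually.of_forall fun w => ?_
    rw [Real.norm_of_nonneg (hg_nonneg n w)]
    exact min_le_right _ _
  have hC : Integrable (fun w => Real.exp w + 1) ξ := hξexp.add (integrable_const 1)
  have hgexp : ∀ n, Integrable (fun w => Real.exp (g n w)) ξ := by
    intro n
    refine hC.mono' ((hgmeas n).exp).aestronglyMeasurable ?_
    refine Filter.Eventually.of_forall fun w => ?_
    rw [Real.norm_of_nonneg (Real.exp_pos _).le]
    calc Real.exp (g n w) ≤ Real.exp (max w 0) :=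
          Real.exp_le_exp.2 (min_le_left _ _)
      _ ≤ Real.exp w + 1 := by
          rcases le_total w 0 with h | h
          · rw [max_eq_right h, Real.exp_zero]; linarith [Real.exp_pos w]
          · rw [max_eq_left h]; linarith
  set B : ℝ := ∫ x, llr μ ξ x ∂μ + Real.log (∫ w, (Real.exp w + 1) ∂ξ) with hB
  have hbound : ∀ n, ∫ w, g n w ∂μ ≤ B := by
    intro n
    have h1 := gibbs' μ ξ hμξ hint (g n) (hgint n) (hgexp n)
    have h2 : Real.log (∫ w, Real.exp (g n w) ∂ξ) ≤ Real.log (∫ w, (Real.exp w + 1) ∂ξ) := by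
      refine Real.log_le_log (integral_exp_pos (hgexp n)) ?_
      refine integral_mono (hgexp n) hC fun w => ?_
      calc Real.exp (g n w) ≤ Real.exp (max w 0) := Real.exp_le_exp.2 (min_le_left _ _)
        _ ≤ Real.exp w + 1 := by
            rcases le_total w 0 with h | h
            · rw [max_eq_right h, Real.exp_zero]; linarith [Real.exp_pos w]
            · rw [max_eq_left h]; linarith
    rw [hB]; linarith
  have hmono : Monotone fun n => fun w => ENNReal.ofReal (g n w) := by
    intro m n hmn
    refine fun w => ENNReal.ofReal_le_ofReal (min_le_min le_rfl (Nat.cast_le.2 hmn))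
  have hsup : ∀ w, (⨆ n, ENNReal.ofReal (g n w)) = ENNReal.ofReal (max w 0) := by
    intro w
    refine le_antisymm (iSup_le fun n => ENNReal.ofReal_le_ofReal (min_le_left _ _)) ?_
    refine le_iSup_of_le ⌈max w 0⌉₊ (le_of_eq ?_)
    rw [hg]; simp only []
    rw [min_eq_left (Nat.le_ceil _)]
  have hlint : ∫⁻ w, ENNReal.ofReal (max w 0) ∂μ ≤ ENNReal.ofReal B := by
    have : ∫⁻ w, ENNReal.ofReal (max w 0) ∂μ = ⨆ n, ∫⁻ w, ENNReal.ofReal (g n w) ∂μ := by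
      rw [← lintegral_iSup (fun n => (hgmeas n).ennreal_ofReal) hmono]
      exact lintegral_congr fun w => (hsup w).symm
    rw [this]
    refine iSup_le fun n => ?_
    rw [← ofReal_integral_eq_lintegral_ofReal (hgint n)
      (Filter.Eventually.of_forall (hg_nonneg n))]
    exact ENNReal.ofReal_le_ofReal (hbound n)
  have hmax : Integrable (fun w => max w 0) μ := by
    refine ⟨(measurable_id.max measurable_const).aestronglyMeasurable, ?_⟩
    rw [hasFiniteIntegral_iff_norm]
    calc ∫⁻ w, ENNReal.ofReal ‖max w 0‖ ∂μ = ∫⁻ w, ENNReal.ofReal (max w 0) ∂μ := by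
          refine lintegral_congr fun w => by rw [Real.norm_of_nonneg (le_max_right _ _)]
      _ ≤ ENNReal.ofReal B := hlint
      _ < ⊤ := ENNReal.ofReal_lt_top
  refine hmax.congr ?_
  filter_upwards [h0] with w hw
  exact max_eq_left hw

/-- Log-moment generating function of a measure on ℝ. -/
noncomputable def logMGF (ξ : Measure ℝ) (α : ℝ) : ℝ :=
  Real.log (∫ x, Real.exp (α * x) ∂ξ)

/-- Legendre (Fenchel) transform, valued in `ℝ≥0∞`. -/
noncomputable def legendre (Λ : ℝ → ℝ) (x : ℝ) : ℝ≥0∞ :=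
  ⨆ α : ℝ, ENNReal.ofReal (α * x - Λ α)

open scoped Classical in
noncomputable def relEntropy {Ω : Type*} [MeasurableSpace Ω] (ν ξ : Measure Ω) : ℝ≥0∞ :=
  if ν ≪ ξ ∧ Integrable (fun x => Real.log (ν.rnDeriv ξ x).toReal) ν
  then ENNReal.ofReal (∫ x, Real.log (ν.rnDeriv ξ x).toReal ∂ν) else ⊤

theorem stmt0 {S : Type*} [MetricSpace S] [CompleteSpace S]
    [TopologicalSpace.SeparableSpace S] [MeasurableSpace S] [BorelSpace S]
    (μ ν : Measure S) [IsProbabilityMeasure μ] [IsProbabilityMeasure ν]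
    (hνμ : ν ≪ μ)
    (ξ : Measure ℝ) [IsProbabilityMeasure ξ]
    (hξ0 : ξ (Set.Iio 0) = 0) (hξmean : ∫ x, x ∂ξ = 1)
    (hξexp : ∀ α : ℝ, Integrable (fun x => Real.exp (α * x)) ξ)
    (κ : ProbabilityTheory.Kernel S ℝ) [ProbabilityTheory.IsMarkovKernel κ]
    (ρ : Measure (S × ℝ)) [IsProbabilityMeasure ρ]
    (hρ : ρ = μ.compProd κ)
    (hκ0 : ∀ᵐ x ∂μ, (κ x) (Set.Iio 0) = 0)
    (hmean : ∀ᵐ x ∂μ, ∫ w, w ∂(κ x) = (ν.rnDeriv μ x).toReal) :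
    ∫⁻ x, legendre (logMGF ξ) ((ν.rnDeriv μ x).toReal) ∂μ
      ≤ ∫⁻ x, relEntropy (κ x) ξ ∂μ := by
  refine lintegral_mono_ae ?_
  filter_upwards [hκ0, hmean] with x hx0 hxm
  set p : Measure ℝ := κ x with hp
  haveI : IsProbabilityMeasure p := by rw [hp]; infer_instance
  rw [relEntropy]
  split_ifs with h
  · obtain ⟨hac, hint⟩ := h
    have hint' : Integrable (llr p ξ) p := hint
    have hH : ∫ x, llr p ξ x ∂p = ∫ w, Real.log (p.rnDeriv ξ w).toReal ∂p := rfl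
    -- a.e. nonnegativity of the coordinate under p
    have hnn : ∀ᵐ w ∂p, 0 ≤ w := by
      rw [ae_iff]
      convert hx0 using 2
      ext w; simp [not_le, Set.mem_Iio]
    -- integrability of the identity
    have hid : Integrable (fun w => w) p :=
      integrable_id_of_llr p ξ hac hint' hnn (by simpa using hξexp 1)
    refine iSup_le fun α => ?_
    refine ENNReal.ofReal_le_ofReal ?_
    rw [← hH]
    have := gibbs' p ξ hac hint' (fun w => α * w) (hid.const_mul α) (hξexp α)
    rw [integral_const_mul] at this
    rw [hxm] at this
    exact this
  · exact le_top
end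

section
/- Let (M_1^n,…,M_n^n) be obtained from independent Poisson(m/n) random variables (Z_1^n,…,Z_n^n) by the following coupling: if ΣZ_i = m set M_i = Z_i; if ΣZ_i > m remove ΣZ_i − m balls chosen uniformly at random from the urns with occupation numbers Z_i; if ΣZ_i < m add m − ΣZ_i balls to urns chosen independently and uniformly. Then (M_1^n,…,M_n^n) has the Multinomial(m, (1/n,…,1/n)) distribution. -/
open MeasureTheory ENNReal NNReal Filter

noncomputable def removeOne {n : ℕ} (z : Fin n → ℕ) : Measure (Fin n → ℕ) :=
  ∑ i, (((z i : ℝ≥0∞)) / ((∑ j, z j : ℕ) : ℝ≥0∞)) • Measure.dirac (Function.update z i (z i - 1))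

noncomputable def addOne {n : ℕ} (z : Fin n → ℕ) : Measure (Fin n → ℕ) :=
  ∑ i, ((n : ℝ≥0∞))⁻¹ • Measure.dirac (Function.update z i (z i + 1))

open scoped Classical in
noncomputable def adjust {n : ℕ} (m : ℕ) (z : Fin n → ℕ) : Measure (Fin n → ℕ) :=
  if m ≤ ∑ i, z i
  then (fun μ => μ.bind removeOne)^[(∑ i, z i) - m] (Measure.dirac z)
  else (fun μ => μ.bind addOne)^[m - ∑ i, z i] (Measure.dirac z)

noncomputable def multinomialUniform (m n : ℕ) [NeZero n] : Measure (Fin n → ℕ) :=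
  Measure.map (fun f : Fin m → Fin n => fun i => (Finset.univ.filter fun j => f j = i).card)
    ((PMF.uniformOfFintype (Fin m → Fin n)).toMeasure)

set_option linter.unusedSectionVars false

namespace Stmt5Aux
open Function MeasureTheory ProbabilityTheory Nat



variable {α β γ : Type*} [MeasurableSpace α] [MeasurableSpace β] [MeasurableSpace γ]

lemma bind_apply_singleton [Countable α] [MeasurableSingletonClass α]
    [MeasurableSingletonClass β]
    (μ : Measure α) (g : α → Measure β) (v : β) :
    (μ.bind g) {v} = ∑' w, μ {w} * g w {v} := by
  rw [Measure.bind_apply (measurableSet_singleton v) (measurable_of_countable g).aemeasurable,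
    lintegral_countable']
  exact tsum_congr fun w => mul_comm _ _

lemma bind_sum [Countable α] [MeasurableSingletonClass α] (μs : ℕ → Measure α)
    (g : α → Measure β) :
    (Measure.sum μs).bind g = Measure.sum (fun k => (μs k).bind g) := by
  ext s hs
  rw [Measure.bind_apply hs (measurable_of_countable g).aemeasurable, lintegral_sum_measure,
    Measure.sum_apply _ hs]
  exact tsum_congr fun k => (Measure.bind_apply hs (measurable_of_countable g).aemeasurable).symm

lemma bind_smul [Countable α] [MeasurableSingletonClass α] (c : ℝ≥0∞) (μ : Measure α)
    (g : α → Measure β) : (c • μ).bind g = c • (μ.bind g) := by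
  ext s hs
  rw [Measure.smul_apply, Measure.bind_apply hs (measurable_of_countable g).aemeasurable,
    Measure.bind_apply hs (measurable_of_countable g).aemeasurable, lintegral_smul_measure, smul_eq_mul]

lemma map_bind [Countable α] [MeasurableSingletonClass α] (μ : Measure α)
    (F : α → Measure β) (h : β → γ) (hh : Measurable h) :
    (μ.bind F).map h = μ.bind (fun x => (F x).map h) := by
  ext s hs
  rw [Measure.map_apply hh hs, Measure.bind_apply (hh hs) (measurable_of_countable F).aemeasurable,
    Measure.bind_apply hs (measurable_of_countable _).aemeasurable]
  exact lintegral_congr fun x => (Measure.map_apply hh hs).symm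

lemma bind_map [Countable α] [MeasurableSingletonClass α] [Countable β]
    [MeasurableSingletonClass β] (μ : Measure α) (g : α → β) (F : β → Measure γ) :
    (μ.map g).bind F = μ.bind (F ∘ g) := by
  ext s hs
  rw [Measure.bind_apply hs (measurable_of_countable F).aemeasurable,
    lintegral_map (measurable_of_countable _) (measurable_of_countable g),
    Measure.bind_apply hs (measurable_of_countable _).aemeasurable]
  rfl

lemma bind_iterate [Countable α] [MeasurableSingletonClass α]
    (g : α → Measure α) (d : ℕ) (μ : Measure α) :
    μ.bind (fun z => (fun ν => ν.bind g)^[d] (Measure.dirac z)) = (fun ν => ν.bind g)^[d] μ := by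
  induction d generalizing μ with
  | zero => simp [Measure.bind_dirac]
  | succ d ih =>
    simp only [Function.iterate_succ_apply']
    rw [← Measure.bind_bind (measurable_of_countable _).aemeasurable (measurable_of_countable g).aemeasurable, ih]

lemma iterate_smul [Countable α] [MeasurableSingletonClass α]
    (g : α → Measure α) (d : ℕ) (c : ℝ≥0∞) (μ : Measure α) :
    (fun ν => ν.bind g)^[d] (c • μ) = c • (fun ν => ν.bind g)^[d] μ := by
  induction d generalizing μ with
  | zero => rfl
  | succ d ih => simp only [Function.iterate_succ_apply, bind_smul, ih]

lemma sum_smul (t : ℕ → ℝ≥0∞) (ν : Measure α) :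
    Measure.sum (fun k => t k • ν) = (∑' k, t k) • ν := by
  ext s hs
  rw [Measure.sum_apply _ hs, Measure.smul_apply, smul_eq_mul, ← ENNReal.tsum_mul_right]
  exact tsum_congr fun k => rfl


open Function MeasureTheory

variable {n : ℕ} [NeZero n]

def counts {k : ℕ} (f : Fin k → Fin n) : Fin n → ℕ :=
  fun i => (Finset.univ.filter fun j => f j = i).card

lemma multinomialUniform_eq (k : ℕ) :
    multinomialUniform k n = ((PMF.uniformOfFintype (Fin k → Fin n)).toMeasure).map counts := rfl

lemma uniform_mass {A : Type*} [Fintype A] [Nonempty A] [MeasurableSpace A]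
    [MeasurableSingletonClass A] (a : A) :
    (PMF.uniformOfFintype A).toMeasure {a} = (Fintype.card A : ℝ≥0∞)⁻¹ := by
  rw [PMF.toMeasure_apply_singleton _ _ (measurableSet_singleton a), PMF.uniformOfFintype_apply]

lemma counts_apply {k : ℕ} (f : Fin k → Fin n) (i : Fin n) :
    counts f i = ∑ j, if f j = i then 1 else 0 := Finset.card_filter _ _

lemma counts_snoc {k : ℕ} (f : Fin k → Fin n) (a : Fin n) :
    counts (Fin.snoc f a) = Function.update (counts f) a (counts f a + 1) := by
  funext i
  rw [counts_apply, Fin.sum_univ_castSucc]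
  simp only [Fin.snoc_castSucc, Fin.snoc_last, ← counts_apply]
  rcases eq_or_ne i a with rfl | h
  · simp
  · simp [Function.update_of_ne h, if_neg (Ne.symm h)]

lemma sum_counts {k : ℕ} (f : Fin k → Fin n) : ∑ i, counts f i = k := by
  have := Finset.card_eq_sum_card_fiberwise (f := f) (s := Finset.univ) (t := Finset.univ)
    (fun x _ => Finset.mem_univ _)
  simpa [counts] using this.symm

lemma uniform_bind_snoc (k : ℕ) :
    ((PMF.uniformOfFintype (Fin k → Fin n)).toMeasure).bind
        (fun f => ((PMF.uniformOfFintype (Fin n)).toMeasure).map (Fin.snoc f)) =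
      (PMF.uniformOfFintype (Fin (k + 1) → Fin n)).toMeasure := by
  have hn : (n : ℝ≥0∞) ≠ 0 := by exact_mod_cast Nat.cast_ne_zero.2 (NeZero.ne n)
  rw [Measure.ext_iff_singleton]
  intro h
  rw [bind_apply_singleton, tsum_eq_single (Fin.init h) ?side]
  · rw [uniform_mass, Measure.map_apply (measurable_of_countable _) (measurableSet_singleton _)]
    have hpre : Fin.snoc (α := fun _ => Fin n) (Fin.init h) ⁻¹' {h} = ({h (Fin.last k)} : Set (Fin n)) := by
      ext a
      simp only [Set.mem_preimage, Set.mem_singleton_iff]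
      constructor
      · intro ha; rw [← ha, Fin.snoc_last]
      · rintro rfl; exact Fin.snoc_init_self h
    rw [hpre, uniform_mass, uniform_mass]
    simp only [Fintype.card_fun, Fintype.card_fin]
    rw [pow_succ, Nat.cast_mul, ENNReal.mul_inv (Or.inl (by exact_mod_cast pow_ne_zero k (NeZero.ne n))) (Or.inr hn)]
  case side =>
    intro f hf
    rw [Measure.map_apply (measurable_of_countable _) (measurableSet_singleton _)]
    have : Fin.snoc (α := fun _ => Fin n) f ⁻¹' {h} = ∅ := by
      ext a
      simp only [Set.mem_preimage, Set.mem_singleton_iff, Set.mem_empty_iff_false, iff_false]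
      intro ha
      exact hf (by rw [← ha, Fin.init_snoc])
    rw [this, measure_empty, mul_zero]

lemma addOne_eq_map (z : Fin n → ℕ) :
    addOne z = ((PMF.uniformOfFintype (Fin n)).toMeasure).map
      (fun a => Function.update z a (z a + 1)) := by
  rw [Measure.ext_iff_singleton]
  intro v
  rw [Measure.map_apply (measurable_of_countable _) (measurableSet_singleton _),
    PMF.toMeasure_apply_fintype, addOne, Measure.finset_sum_apply]
  refine Finset.sum_congr rfl fun i _ => ?_
  rw [Measure.smul_apply, Measure.dirac_apply' _ (measurableSet_singleton _)]
  simp only [Set.indicator_apply, Set.mem_preimage, Set.mem_singleton_iff,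
    PMF.uniformOfFintype_apply, Fintype.card_fin, Pi.one_apply, smul_eq_mul]
  by_cases hiv : Function.update z i (z i + 1) = v <;> simp [hiv]

lemma multinomial_succ (k : ℕ) :
    multinomialUniform (k + 1) n = (multinomialUniform k n).bind addOne := by
  rw [multinomialUniform_eq, multinomialUniform_eq, bind_map]
  have h1 : (addOne ∘ (counts (n := n) (k := k))) =
      fun f => ((PMF.uniformOfFintype (Fin n)).toMeasure).map (counts ∘ Fin.snoc f) := by
    funext f
    rw [Function.comp_apply, addOne_eq_map]
    congr 1
    funext a
    rw [Function.comp_apply, counts_snoc]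
  rw [h1]
  have h2 : ∀ f : Fin k → Fin n,
      ((PMF.uniformOfFintype (Fin n)).toMeasure).map (counts ∘ Fin.snoc f) =
        ((((PMF.uniformOfFintype (Fin n)).toMeasure).map (Fin.snoc f)).map counts) := fun f =>
    (Measure.map_map (measurable_of_countable _) (measurable_of_countable _)).symm
  simp_rw [h2]
  rw [← map_bind _ _ _ (measurable_of_countable _), uniform_bind_snoc]

lemma multinomial_zero : multinomialUniform 0 n = Measure.dirac (fun _ => 0) := by
  have h1 : (PMF.uniformOfFintype (Fin 0 → Fin n)).toMeasure
      = Measure.dirac (fun j : Fin 0 => j.elim0) := by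
    rw [Measure.ext_iff_singleton]
    intro f
    rw [uniform_mass]
    have hf : f = fun j : Fin 0 => j.elim0 := funext fun j => j.elim0
    subst hf
    simp [Measure.dirac_apply_of_mem, Fintype.card_fun]
  have h2 : counts (fun j : Fin 0 => j.elim0) = (fun _ : Fin n => 0) :=
    funext fun i => by simp [counts]
  rw [multinomialUniform_eq, h1, Measure.map_dirac' (measurable_of_countable _), h2]



lemma poisson_mass (r : ℝ≥0) (x : ℕ) :
    poissonMeasure r {x} = ENNReal.ofReal (Real.exp (-r) * (r : ℝ) ^ x / x !) := by
  rw [poissonMeasure_singleton]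

lemma poisson_ratio (r : ℝ≥0) (x : ℕ) :
    poissonMeasure r {x + 1} * (x + 1 : ℕ) = poissonMeasure r {x} * r := by
  rw [poisson_mass, poisson_mass]
  rw [(by rw [ENNReal.ofReal_natCast] : ((x + 1 : ℕ) : ℝ≥0∞) = ENNReal.ofReal ((x + 1 : ℕ) : ℝ)),
    (by rw [ENNReal.ofReal_coe_nnreal] : ((r : ℝ≥0) : ℝ≥0∞) = ENNReal.ofReal (r : ℝ)),
    ← ENNReal.ofReal_mul (by positivity), ← ENNReal.ofReal_mul (by positivity)]
  congr 1
  rw [Nat.factorial_succ]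
  have h1 : (x ! : ℝ) ≠ 0 := by exact_mod_cast (Nat.factorial_pos x).ne'
  have h2 : ((x + 1 : ℕ) : ℝ) ≠ 0 := by positivity
  push_cast
  field_simp
  ring

noncomputable def Pm (n m : ℕ) : Measure (Fin n → ℕ) :=
  Measure.pi fun _ : Fin n => poissonMeasure ((m : ℝ≥0) / (n : ℝ≥0))

noncomputable def Pk (n m k : ℕ) : Measure (Fin n → ℕ) :=
  (Pm n m).restrict {z | ∑ i, z i = k}

lemma Pm_singleton (n m : ℕ) (z : Fin n → ℕ) :
    Pm n m {z} = ∏ i, poissonMeasure ((m : ℝ≥0) / (n : ℝ≥0)) {z i} := by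
  rw [Pm, ← Set.univ_pi_singleton z, Measure.pi_pi]

lemma Pm_update_add (n m : ℕ) (z : Fin n → ℕ) (i : Fin n) :
    Pm n m {Function.update z i (z i + 1)} * ((z i + 1 : ℕ) : ℝ≥0∞)
      = Pm n m {z} * ((m : ℝ≥0) / (n : ℝ≥0) : ℝ≥0) := by
  set r : ℝ≥0 := (m : ℝ≥0) / (n : ℝ≥0)
  rw [Pm_singleton, Pm_singleton]
  have hupd : ∀ j, poissonMeasure r {Function.update z i (z i + 1) j}
      = Function.update (fun j => poissonMeasure r {z j}) i (poissonMeasure r {z i + 1}) j := by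
    intro j
    rcases eq_or_ne j i with rfl | h
    · simp
    · simp [Function.update_of_ne h]
  rw [Finset.prod_congr rfl (fun j _ => hupd j),
    Finset.prod_update_of_mem (Finset.mem_univ i),
    Finset.prod_eq_mul_prod_sdiff_singleton_of_mem (Finset.mem_univ i)
      (fun j => poissonMeasure r {z j})]
  have := poisson_ratio r (z i)
  calc (poissonMeasure r {z i + 1} * ∏ j ∈ Finset.univ \ {i}, poissonMeasure r {z j})
        * ((z i + 1 : ℕ) : ℝ≥0∞)
      = (poissonMeasure r {z i + 1} * ((z i + 1 : ℕ) : ℝ≥0∞))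
        * ∏ j ∈ Finset.univ \ {i}, poissonMeasure r {z j} := by ring
    _ = (poissonMeasure r {z i} * r)
        * ∏ j ∈ Finset.univ \ {i}, poissonMeasure r {z j} := by rw [this]
    _ = poissonMeasure r {z i} * (∏ j ∈ Finset.univ \ {i}, poissonMeasure r {z j}) * r := by
        ring

lemma Pm_update_sub (n m : ℕ) (z : Fin n → ℕ) (i : Fin n) (h : 1 ≤ z i) :
    Pm n m {Function.update z i (z i - 1)} * ((m : ℝ≥0) / (n : ℝ≥0) : ℝ≥0)
      = Pm n m {z} * ((z i : ℕ) : ℝ≥0∞) := by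
  have key := Pm_update_add n m (Function.update z i (z i - 1)) i
  have h1 : Function.update (Function.update z i (z i - 1)) i
      (Function.update z i (z i - 1) i + 1) = z := by
    rw [Function.update_self, Function.update_idem]
    have : z i - 1 + 1 = z i := Nat.succ_pred_eq_of_pos h
    rw [this, Function.update_eq_self]
  rw [h1, Function.update_self] at key
  have h2 : z i - 1 + 1 = z i := Nat.succ_pred_eq_of_pos h
  rw [h2] at key
  rw [← key]

lemma sum_update (n : ℕ) (z : Fin n → ℕ) (i : Fin n) (a : ℕ) :
    ∑ j, Function.update z i a j = (∑ j, z j) - z i + a := by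
  rw [Finset.sum_update_of_mem (Finset.mem_univ i),
    Finset.sum_eq_sum_sdiff_singleton_add (Finset.mem_univ i) z]
  omega

lemma measurableSet_sumEq (n k : ℕ) : MeasurableSet {z : Fin n → ℕ | ∑ i, z i = k} :=
  (measurable_of_countable (fun z : Fin n → ℕ => ∑ i, z i)) (measurableSet_singleton k)

lemma Pk_singleton (n m k : ℕ) (w : Fin n → ℕ) :
    Pk n m k {w} = if ∑ i, w i = k then Pm n m {w} else 0 := by
  rw [Pk, Measure.restrict_apply (measurableSet_singleton w)]
  by_cases h : ∑ i, w i = k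
  · have hss : ({w} : Set (Fin n → ℕ)) ∩ {z | ∑ i, z i = k} = {w} :=
      Set.inter_eq_self_of_subset_left (Set.singleton_subset_iff.2 h)
    rw [hss, if_pos h]
  · have hss : ({w} : Set (Fin n → ℕ)) ∩ {z | ∑ i, z i = k} = ∅ := by
      ext x
      simp only [Set.mem_inter_iff, Set.mem_singleton_iff, Set.mem_setOf_eq,
        Set.mem_empty_iff_false, iff_false, not_and]
      rintro rfl
      exact h
    rw [hss, measure_empty, if_neg h]

lemma R_rec (n m k : ℕ) [NeZero n] :
    (Pk n m (k + 1)).bind removeOne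
      = ((m : ℝ≥0∞) / ((k + 1 : ℕ) : ℝ≥0∞)) • Pk n m k := by
  have hn0 : (n : ℝ≥0) ≠ 0 := Nat.cast_ne_zero.2 (NeZero.ne n)
  set r : ℝ≥0 := (m : ℝ≥0) / (n : ℝ≥0) with hr
  have hmr : (r : ℝ≥0∞) = (m : ℝ≥0∞) * ((n : ℝ≥0∞))⁻¹ := by
    rw [hr, ENNReal.coe_div hn0, ENNReal.coe_natCast, ENNReal.coe_natCast,
      div_eq_mul_inv]
  have hnr : (n : ℝ≥0∞) * (r : ℝ≥0∞) = (m : ℝ≥0∞) := by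
    rw [hmr, ← mul_assoc, mul_comm (n : ℝ≥0∞) (m : ℝ≥0∞), mul_assoc,
      ENNReal.mul_inv_cancel (by exact_mod_cast NeZero.ne n) (ENNReal.natCast_ne_top n), mul_one]
  rw [Measure.ext_iff_singleton]
  intro v
  rw [bind_apply_singleton, Measure.smul_apply, smul_eq_mul, Pk_singleton]
  have hrem : ∀ w : Fin n → ℕ, removeOne w ({v} : Set (Fin n → ℕ))
      = ∑ i, ((w i : ℝ≥0∞) / ((∑ j, w j : ℕ) : ℝ≥0∞))
          * (if Function.update w i (w i - 1) = v then 1 else 0) := by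
    intro w
    rw [removeOne, Measure.finset_sum_apply]
    refine Finset.sum_congr rfl fun i _ => ?_
    rw [Measure.smul_apply, Measure.dirac_apply' _ (measurableSet_singleton v), smul_eq_mul]
    simp [Set.indicator_apply]
  simp_rw [hrem, Finset.mul_sum]
  rw [Summable.tsum_finsetSum (fun i _ => ENNReal.summable)]
  have key : ∀ i : Fin n, (∑' w : Fin n → ℕ, Pk n m (k + 1) {w} *
      (((w i : ℝ≥0∞) / ((∑ j, w j : ℕ) : ℝ≥0∞)) *
        (if Function.update w i (w i - 1) = v then 1 else 0)))
      = if ∑ j, v j = k then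
          Pm n m {v} * (r : ℝ≥0∞) * (((k + 1 : ℕ) : ℝ≥0∞))⁻¹ else 0 := by
    intro i
    by_cases hv : ∑ j, v j = k
    · rw [if_pos hv, tsum_eq_single (Function.update v i (v i + 1)) ?_]
      · rw [Pk_singleton]
        have hle : v i ≤ ∑ j, v j :=
          Finset.single_le_sum (fun j _ => Nat.zero_le (v j)) (Finset.mem_univ i)
        have hsum : ∑ j, Function.update v i (v i + 1) j = k + 1 := by
          rw [sum_update]; omega
        rw [if_pos hsum, hsum, Function.update_self]
        have hback : Function.update (Function.update v i (v i + 1)) i (v i + 1 - 1) = v := by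
          rw [Nat.add_sub_cancel, Function.update_idem, Function.update_eq_self]
        rw [if_pos hback, mul_one, div_eq_mul_inv, ← mul_assoc, Pm_update_add n m v i,
          ← hr]
      · intro w hw
        rw [Pk_singleton]
        by_cases hsw : ∑ j, w j = k + 1
        swap
        · rw [if_neg hsw, zero_mul]
        rw [if_pos hsw]
        by_cases hupd : Function.update w i (w i - 1) = v
        swap
        · rw [if_neg hupd, mul_zero, mul_zero]
        by_cases hwi : w i = 0
        · rw [hwi]; simp
        · exfalso
          apply hw
          funext j
          rcases eq_or_ne j i with rfl | hj
          · have hvj : w j - 1 = v j := by rw [← hupd, Function.update_self]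
            rw [Function.update_self]
            omega
          · rw [Function.update_of_ne hj, ← hupd, Function.update_of_ne hj]
    · rw [if_neg hv]
      have hz : ∀ w : Fin n → ℕ, Pk n m (k + 1) {w} *
          (((w i : ℝ≥0∞) / ((∑ j, w j : ℕ) : ℝ≥0∞)) *
            (if Function.update w i (w i - 1) = v then 1 else 0)) = 0 := by
        intro w
        rw [Pk_singleton]
        by_cases hsw : ∑ j, w j = k + 1
        swap
        · rw [if_neg hsw, zero_mul]
        by_cases hupd : Function.update w i (w i - 1) = v
        swap
        · rw [if_neg hupd, mul_zero, mul_zero]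
        by_cases hwi : w i = 0
        · rw [hwi]; simp
        · exfalso
          apply hv
          have hle : w i ≤ ∑ j, w j :=
            Finset.single_le_sum (fun j _ => Nat.zero_le (w j)) (Finset.mem_univ i)
          rw [← hupd, sum_update]
          omega
      rw [tsum_congr hz, tsum_zero]
  rw [Finset.sum_congr rfl (fun i _ => key i), Finset.sum_const, Finset.card_univ,
    Fintype.card_fin, nsmul_eq_mul]
  by_cases hv : ∑ j, v j = k
  · rw [if_pos hv, if_pos hv, div_eq_mul_inv]
    calc (n : ℝ≥0∞) * (Pm n m {v} * (r : ℝ≥0∞) * (((k + 1 : ℕ) : ℝ≥0∞))⁻¹)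
        = ((n : ℝ≥0∞) * (r : ℝ≥0∞)) * Pm n m {v} * (((k + 1 : ℕ) : ℝ≥0∞))⁻¹ := by ring
      _ = (m : ℝ≥0∞) * Pm n m {v} * (((k + 1 : ℕ) : ℝ≥0∞))⁻¹ := by rw [hnr]
      _ = (m : ℝ≥0∞) * (((k + 1 : ℕ) : ℝ≥0∞))⁻¹ * Pm n m {v} := by ring
  · rw [if_neg hv, if_neg hv, mul_zero, mul_zero]

lemma A_rec (n m k : ℕ) [NeZero n] :
    (m : ℝ≥0∞) • ((Pk n m k).bind addOne) = ((k + 1 : ℕ) : ℝ≥0∞) • Pk n m (k + 1) := by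
  have hn0 : (n : ℝ≥0) ≠ 0 := Nat.cast_ne_zero.2 (NeZero.ne n)
  set r : ℝ≥0 := (m : ℝ≥0) / (n : ℝ≥0) with hr
  have hmr : (r : ℝ≥0∞) = (m : ℝ≥0∞) * ((n : ℝ≥0∞))⁻¹ := by
    rw [hr, ENNReal.coe_div hn0, ENNReal.coe_natCast, ENNReal.coe_natCast,
      div_eq_mul_inv]
  rw [Measure.ext_iff_singleton]
  intro v
  rw [Measure.smul_apply, smul_eq_mul, Measure.smul_apply, smul_eq_mul, bind_apply_singleton,
    Pk_singleton]
  have hadd : ∀ w : Fin n → ℕ, addOne w ({v} : Set (Fin n → ℕ))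
      = ∑ i, ((n : ℝ≥0∞))⁻¹ * (if Function.update w i (w i + 1) = v then 1 else 0) := by
    intro w
    rw [addOne, Measure.finset_sum_apply]
    refine Finset.sum_congr rfl fun i _ => ?_
    rw [Measure.smul_apply, Measure.dirac_apply' _ (measurableSet_singleton v), smul_eq_mul]
    simp [Set.indicator_apply]
  simp_rw [hadd, Finset.mul_sum]
  rw [Summable.tsum_finsetSum (fun i _ => ENNReal.summable), Finset.mul_sum]
  have key : ∀ i : Fin n,
      (m : ℝ≥0∞) * (∑' w : Fin n → ℕ, Pk n m k {w} *
        (((n : ℝ≥0∞))⁻¹ * (if Function.update w i (w i + 1) = v then 1 else 0)))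
      = (if ∑ j, v j = k + 1 then Pm n m {v} else 0) * ((v i : ℕ) : ℝ≥0∞) := by
    intro i
    by_cases hv : ∑ j, v j = k + 1
    · by_cases hvi : v i = 0
      · have hz : ∀ w : Fin n → ℕ, Pk n m k {w} *
            (((n : ℝ≥0∞))⁻¹ * (if Function.update w i (w i + 1) = v then 1 else 0)) = 0 := by
          intro w
          have hne : Function.update w i (w i + 1) ≠ v := by
            intro hupd
            apply Nat.succ_ne_zero (w i)
            rw [← hvi, ← hupd, Function.update_self]
          rw [if_neg hne, mul_zero, mul_zero]
        rw [tsum_congr hz, tsum_zero, mul_zero, hvi, Nat.cast_zero, mul_zero]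
      · rw [if_pos hv, tsum_eq_single (Function.update v i (v i - 1)) ?_]
        · rw [Pk_singleton]
          have hle : v i ≤ ∑ j, v j :=
            Finset.single_le_sum (fun j _ => Nat.zero_le (v j)) (Finset.mem_univ i)
          have hsum : ∑ j, Function.update v i (v i - 1) j = k := by
            rw [sum_update]; omega
          rw [if_pos hsum]
          have hback : Function.update (Function.update v i (v i - 1)) i
              (Function.update v i (v i - 1) i + 1) = v := by
            rw [Function.update_self, Function.update_idem]
            have h1 : v i - 1 + 1 = v i := by omega
            rw [h1, Function.update_eq_self]
          rw [if_pos hback, mul_one]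
          have hratio := Pm_update_sub n m v i (by omega)
          rw [← hr] at hratio
          calc (m : ℝ≥0∞) * (Pm n m {Function.update v i (v i - 1)} * ((n : ℝ≥0∞))⁻¹)
              = Pm n m {Function.update v i (v i - 1)} * ((m : ℝ≥0∞) * ((n : ℝ≥0∞))⁻¹) := by
                ring
            _ = Pm n m {Function.update v i (v i - 1)} * (r : ℝ≥0∞) := by rw [hmr]
            _ = Pm n m {v} * ((v i : ℕ) : ℝ≥0∞) := hratio
        · intro w hw
          by_cases hupd : Function.update w i (w i + 1) = v
          · exfalso
            apply hw
            funext j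
            rcases eq_or_ne j i with rfl | hj
            · have hvj : w j + 1 = v j := by rw [← hupd, Function.update_self]
              rw [Function.update_self]
              omega
            · rw [Function.update_of_ne hj, ← hupd, Function.update_of_ne hj]
          · rw [if_neg hupd, mul_zero, mul_zero]
    · rw [if_neg hv, zero_mul]
      have hz : ∀ w : Fin n → ℕ, Pk n m k {w} *
          (((n : ℝ≥0∞))⁻¹ * (if Function.update w i (w i + 1) = v then 1 else 0)) = 0 := by
        intro w
        by_cases hsw : ∑ j, w j = k
        · by_cases hupd : Function.update w i (w i + 1) = v
          · exfalso
            apply hv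
            have hle : w i ≤ ∑ j, w j :=
              Finset.single_le_sum (fun j _ => Nat.zero_le (w j)) (Finset.mem_univ i)
            rw [← hupd, sum_update]
            omega
          · rw [if_neg hupd, mul_zero, mul_zero]
        · rw [Pk_singleton, if_neg hsw, zero_mul]
      rw [tsum_congr hz, tsum_zero, mul_zero]
  rw [Finset.sum_congr rfl (fun i _ => key i), ← Finset.mul_sum, ← Nat.cast_sum]
  by_cases hv : ∑ j, v j = k + 1
  · rw [if_pos hv, hv]
    ring
  · rw [if_neg hv, zero_mul, mul_zero]

lemma tsum_singleton_univ {α : Type*} [MeasurableSpace α] [Countable α]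
    [MeasurableSingletonClass α] (μ : Measure α) : ∑' x : α, μ {x} = μ Set.univ := by
  simpa using Measure.tsum_indicator_apply_singleton μ Set.univ MeasurableSet.univ

lemma R_mass (n m k : ℕ) [NeZero n] :
    ((Pk n m (k + 1)).bind removeOne) Set.univ = Pk n m (k + 1) Set.univ := by
  rw [Measure.bind_apply MeasurableSet.univ (measurable_of_countable _).aemeasurable, lintegral_countable']
  have h1 : ∀ w : Fin n → ℕ, removeOne w Set.univ * Pk n m (k + 1) {w}
      = Pk n m (k + 1) {w} := by
    intro w
    rw [Pk_singleton]
    by_cases hsw : ∑ j, w j = k + 1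
    · rw [if_pos hsw]
      have hone : removeOne w Set.univ = 1 := by
        rw [removeOne, Measure.finset_sum_apply]
        simp only [Measure.smul_apply, smul_eq_mul, measure_univ, mul_one]
        simp_rw [div_eq_mul_inv]
        rw [← Finset.sum_mul, ← Nat.cast_sum, hsw]
        exact ENNReal.mul_inv_cancel (by exact_mod_cast Nat.succ_ne_zero k)
          (ENNReal.natCast_ne_top _)
      rw [hone, one_mul]
    · rw [if_neg hsw, mul_zero]
  rw [tsum_congr h1, tsum_singleton_univ]

lemma A_mass (n : ℕ) [NeZero n] (μ : Measure (Fin n → ℕ)) :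
    (μ.bind addOne) Set.univ = μ Set.univ := by
  rw [Measure.bind_apply MeasurableSet.univ (measurable_of_countable _).aemeasurable, lintegral_countable']
  have h1 : ∀ w : Fin n → ℕ, addOne w Set.univ = 1 := by
    intro w
    rw [addOne, Measure.finset_sum_apply]
    simp only [Measure.smul_apply, smul_eq_mul, measure_univ, mul_one]
    rw [Finset.sum_const, Finset.card_univ, Fintype.card_fin, nsmul_eq_mul]
    exact ENNReal.mul_inv_cancel (by exact_mod_cast NeZero.ne n) (ENNReal.natCast_ne_top n)
  simp_rw [h1, one_mul]
  exact tsum_singleton_univ μ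

lemma sum_Pk (n m : ℕ) : Measure.sum (fun k => Pk n m k) = Pm n m := by
  rw [Measure.ext_iff_singleton]
  intro w
  rw [Measure.sum_apply _ (measurableSet_singleton w),
    tsum_eq_single (∑ i, w i) (fun k hk => by rw [Pk_singleton, if_neg (fun h => hk h.symm)]),
    Pk_singleton, if_pos rfl]

lemma Pk_zero (n m : ℕ) :
    Pk n m 0 = (Pm n m {fun _ => 0}) • Measure.dirac (fun _ => 0) := by
  have hset : {z : Fin n → ℕ | ∑ i, z i = 0} = {fun _ => 0} := by
    ext z
    simp [Finset.sum_eq_zero_iff, funext_iff]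
  rw [Pk, hset, Measure.restrict_singleton]

lemma Pk_mult_zero (n m : ℕ) [NeZero n] :
    Pk n m 0 = (Pm n m {fun _ => 0}) • multinomialUniform 0 n := by
  rw [Pk_zero, multinomial_zero]

lemma Pk_mult (n m : ℕ) [NeZero n] (hm : m ≠ 0) :
    ∀ k : ℕ, ∃ c : ℝ≥0∞, Pk n m k = c • multinomialUniform k n
  | 0 => ⟨Pm n m {fun _ => 0}, Pk_mult_zero n m⟩
  | (k + 1) => by
    obtain ⟨c, hc⟩ := Pk_mult n m hm k
    have hArec := A_rec n m k
    refine ⟨(((k + 1 : ℕ) : ℝ≥0∞))⁻¹ * ((m : ℝ≥0∞) * c), ?_⟩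
    have h1 : Pk n m (k + 1)
        = (((k + 1 : ℕ) : ℝ≥0∞))⁻¹ • (((k + 1 : ℕ) : ℝ≥0∞) • Pk n m (k + 1)) := by
      rw [smul_smul, ENNReal.inv_mul_cancel (by exact_mod_cast Nat.succ_ne_zero k)
        (ENNReal.natCast_ne_top _), one_smul]
    rw [h1, ← hArec, hc, bind_smul, ← multinomial_succ, smul_smul, smul_smul, mul_assoc]

lemma Pk_mult_m (n m : ℕ) [NeZero n] :
    ∃ c : ℝ≥0∞, Pk n m m = c • multinomialUniform m n := by
  rcases Nat.eq_zero_or_pos m with hm | hm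
  · subst hm
    exact ⟨Pm n 0 {fun _ => 0}, Pk_mult_zero n 0⟩
  · exact Pk_mult n m (by omega) m

lemma bind_adjust (n m k : ℕ) [NeZero n] :
    (Pk n m k).bind (adjust m) =
      if m ≤ k then (fun ν => ν.bind removeOne)^[k - m] (Pk n m k)
      else (fun ν => ν.bind addOne)^[m - k] (Pk n m k) := by
  have hA : MeasurableSet {z : Fin n → ℕ | ∑ i, z i = k} := measurableSet_sumEq n k
  by_cases hmk : m ≤ k
  · rw [if_pos hmk, ← bind_iterate removeOne (k - m) (Pk n m k)]
    ext s hs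
    rw [Measure.bind_apply hs (measurable_of_countable _).aemeasurable,
      Measure.bind_apply hs (measurable_of_countable _).aemeasurable, Pk]
    refine setLIntegral_congr_fun hA (fun z hz => ?_)
    have hz' : ∑ i, z i = k := hz
    have : adjust m z = (fun ν => ν.bind removeOne)^[k - m] (Measure.dirac z) := by
      simp only [adjust, hz', if_pos hmk]
    rw [this]
  · rw [if_neg hmk, ← bind_iterate addOne (m - k) (Pk n m k)]
    ext s hs
    rw [Measure.bind_apply hs (measurable_of_countable _).aemeasurable,
      Measure.bind_apply hs (measurable_of_countable _).aemeasurable, Pk]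
    refine setLIntegral_congr_fun hA (fun z hz => ?_)
    have hz' : ∑ i, z i = k := hz
    have : adjust m z = (fun ν => ν.bind addOne)^[m - k] (Measure.dirac z) := by
      simp only [adjust, hz', if_neg hmk]
    rw [this]

lemma iterR (n m : ℕ) [NeZero n] : ∀ d : ℕ,
    ∃ s : ℝ≥0∞, (fun ν => ν.bind removeOne)^[d] (Pk n m (m + d)) = s • Pk n m m ∧
      ((fun ν => ν.bind removeOne)^[d] (Pk n m (m + d))) Set.univ = Pk n m (m + d) Set.univ
  | 0 => ⟨1, by simp, rfl⟩
  | (d + 1) => by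
    obtain ⟨s, hs1, hs2⟩ := iterR n m d
    have hstep : (Pk n m (m + d + 1)).bind removeOne
        = ((m : ℝ≥0∞) / ((m + d + 1 : ℕ) : ℝ≥0∞)) • Pk n m (m + d) := R_rec n m (m + d)
    have heq : m + (d + 1) = m + d + 1 := rfl
    refine ⟨(m : ℝ≥0∞) / ((m + d + 1 : ℕ) : ℝ≥0∞) * s, ?_, ?_⟩
    · rw [heq, Function.iterate_succ_apply, hstep, iterate_smul, hs1, smul_smul]
    · rw [heq, Function.iterate_succ_apply, hstep, iterate_smul]
      calc (((m : ℝ≥0∞) / ((m + d + 1 : ℕ) : ℝ≥0∞)) •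
            (fun ν => ν.bind removeOne)^[d] (Pk n m (m + d))) Set.univ
          = ((m : ℝ≥0∞) / ((m + d + 1 : ℕ) : ℝ≥0∞)) *
            ((fun ν => ν.bind removeOne)^[d] (Pk n m (m + d))) Set.univ := by
            rw [Measure.smul_apply, smul_eq_mul]
        _ = ((m : ℝ≥0∞) / ((m + d + 1 : ℕ) : ℝ≥0∞)) * Pk n m (m + d) Set.univ := by rw [hs2]
        _ = (((m : ℝ≥0∞) / ((m + d + 1 : ℕ) : ℝ≥0∞)) • Pk n m (m + d)) Set.univ := by
            rw [Measure.smul_apply, smul_eq_mul]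
        _ = ((Pk n m (m + d + 1)).bind removeOne) Set.univ := by rw [hstep]
        _ = Pk n m (m + d + 1) Set.univ := R_mass n m (m + d)

lemma iterA (n m : ℕ) [NeZero n] (hm : m ≠ 0) : ∀ d : ℕ, d ≤ m →
    ∃ s : ℝ≥0∞, (fun ν => ν.bind addOne)^[d] (Pk n m (m - d)) = s • Pk n m m ∧
      ((fun ν => ν.bind addOne)^[d] (Pk n m (m - d))) Set.univ = Pk n m (m - d) Set.univ
  | 0 => fun _ => ⟨1, by simp, rfl⟩
  | (d + 1) => fun hdm => by
    obtain ⟨s, hs1, hs2⟩ := iterA n m hm d (by omega)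
    have hm0 : (m : ℝ≥0∞) ≠ 0 := by exact_mod_cast hm
    have hmd : m - (d + 1) + 1 = m - d := by omega
    have hArec := A_rec n m (m - (d + 1))
    rw [hmd] at hArec
    have hstep : (Pk n m (m - (d + 1))).bind addOne
        = ((m : ℝ≥0∞)⁻¹ * ((m - d : ℕ) : ℝ≥0∞)) • Pk n m (m - d) := by
      calc (Pk n m (m - (d + 1))).bind addOne
          = (m : ℝ≥0∞)⁻¹ • ((m : ℝ≥0∞) • ((Pk n m (m - (d + 1))).bind addOne)) := by
            rw [smul_smul, ENNReal.inv_mul_cancel hm0 (ENNReal.natCast_ne_top m), one_smul]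
        _ = (m : ℝ≥0∞)⁻¹ • (((m - d : ℕ) : ℝ≥0∞) • Pk n m (m - d)) := by
            rw [hArec]
        _ = ((m : ℝ≥0∞)⁻¹ * ((m - d : ℕ) : ℝ≥0∞)) • Pk n m (m - d) := by
            rw [smul_smul]
    refine ⟨(m : ℝ≥0∞)⁻¹ * ((m - d : ℕ) : ℝ≥0∞) * s, ?_, ?_⟩
    · rw [Function.iterate_succ_apply, hstep, iterate_smul, hs1, smul_smul]
    · rw [Function.iterate_succ_apply, hstep, iterate_smul]
      calc (((m : ℝ≥0∞)⁻¹ * ((m - d : ℕ) : ℝ≥0∞)) •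
            (fun ν => ν.bind addOne)^[d] (Pk n m (m - d))) Set.univ
          = ((m : ℝ≥0∞)⁻¹ * ((m - d : ℕ) : ℝ≥0∞)) *
            ((fun ν => ν.bind addOne)^[d] (Pk n m (m - d))) Set.univ := by
            rw [Measure.smul_apply, smul_eq_mul]
        _ = ((m : ℝ≥0∞)⁻¹ * ((m - d : ℕ) : ℝ≥0∞)) * Pk n m (m - d) Set.univ := by rw [hs2]
        _ = (((m : ℝ≥0∞)⁻¹ * ((m - d : ℕ) : ℝ≥0∞)) • Pk n m (m - d)) Set.univ := by
            rw [Measure.smul_apply, smul_eq_mul]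
        _ = ((Pk n m (m - (d + 1))).bind addOne) Set.univ := by rw [hstep]
        _ = Pk n m (m - (d + 1)) Set.univ := A_mass n (Pk n m (m - (d + 1)))

end Stmt5Aux

open Stmt5Aux in
theorem stmt5 (n m : ℕ) [NeZero n] :
    (Measure.pi fun _ : Fin n => ProbabilityTheory.poissonMeasure ((m : ℝ≥0) / (n : ℝ≥0))).bind
        (adjust m)
      = multinomialUniform m n := by
  have h0 : (Measure.pi fun _ : Fin n =>
      ProbabilityTheory.poissonMeasure ((m : ℝ≥0) / (n : ℝ≥0))) = Pm n m := rfl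
  rw [h0, ← sum_Pk n m, bind_sum]
  obtain ⟨c, hc⟩ := Pk_mult_m n m
  have hprob : IsProbabilityMeasure (multinomialUniform m n) := by
    rw [multinomialUniform_eq]
    exact Measure.isProbabilityMeasure_map (measurable_of_countable _).aemeasurable
  have key : ∀ k, ((Pk n m k).bind (adjust m))
      = (Pk n m k Set.univ) • multinomialUniform m n := by
    intro k
    have hex : ∃ t : ℝ≥0∞, ((Pk n m k).bind (adjust m)) = t • multinomialUniform m n ∧
        ((Pk n m k).bind (adjust m)) Set.univ = Pk n m k Set.univ := by
      rw [bind_adjust]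
      by_cases hmk : m ≤ k
      · rw [if_pos hmk]
        have hk : m + (k - m) = k := by omega
        obtain ⟨s, hs1, hs2⟩ := iterR n m (k - m)
        rw [hk] at hs1 hs2
        exact ⟨s * c, by rw [hs1, hc, smul_smul], hs2⟩
      · rw [if_neg hmk]
        have hk : m - (m - k) = k := by omega
        obtain ⟨s, hs1, hs2⟩ := iterA n m (by omega) (m - k) (by omega)
        rw [hk] at hs1 hs2
        exact ⟨s * c, by rw [hs1, hc, smul_smul], hs2⟩
    obtain ⟨t, ht, hmass⟩ := hex
    have htv : t = Pk n m k Set.univ := by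
      rw [ht] at hmass
      simpa [Measure.smul_apply, measure_univ] using hmass
    rw [ht, htv]
  simp_rw [key]
  rw [sum_smul]
  have hPm : IsProbabilityMeasure (Pm n m) := by
    rw [Pm]; infer_instance
  have hone : ∑' k, Pk n m k Set.univ = 1 := by
    rw [← Measure.sum_apply _ MeasurableSet.univ, sum_Pk, measure_univ]
  rw [hone, one_smul]
end
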